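/- arXiv:math/0603317 — 2 statements merged into one kernel-verified Lean document; each statement's English description precedes it below -/
import Mathlib

section
/- For s > 1, the k-th time derivative at the origin of u(x,t) = ∫₀^∞ exp(-ρx²/2 + iρt - ρ^{1/s}) dρ satisfies D_t^k u(0,0) = ∫₀^∞ ρ^k exp(-ρ^{1/s}) dρ = s·Γ(s(k+1)), and in particular there exist constants C, c > 0 with c^k (k!)^s ≤ |D_t^k u(0,0)| ≤ C^{k+1} (k!)^s for all k ∈ ℕ. -/
open MeasureTheory Complex

open Real Set

lemma gevrey_aux_eqon {s : ℝ} (hs : 0 < s) (k : ℕ) {x : ℝ} (hx0 : (0:ℝ) < x) :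
    Real.exp (-x) * x ^ (s * (k + 1) - 1)
      = x ^ (s - 1) • ((x ^ s) ^ k * Real.exp (-((x ^ s) ^ (1 / s)))) := by
  have h1 : (x ^ s) ^ (1 / s) = x := by
    rw [← rpow_mul hx0.le, mul_one_div, div_self hs.ne', rpow_one]
  have h2 : (x ^ s) ^ k = x ^ (s * k) := by
    rw [← rpow_natCast (x ^ s) k, ← rpow_mul hx0.le]
  rw [h1, h2, smul_eq_mul, ← mul_assoc, ← rpow_add hx0]
  ring_nf

lemma gevrey_aux_int {s : ℝ} (hs : 0 < s) (k : ℕ) :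
    IntegrableOn (fun ρ : ℝ => ρ ^ k * Real.exp (-(ρ ^ (1 / s)))) (Ioi 0) := by
  rw [← integrableOn_Ioi_comp_rpow_iff' _ hs.ne']
  refine ((Real.GammaIntegral_convergent (s := s * (k + 1)) (by positivity)).congr_fun
    (fun x hx => ?_) measurableSet_Ioi)
  exact gevrey_aux_eqon hs k (mem_Ioi.mp hx)

lemma gevrey_aux_val {s : ℝ} (hs : 0 < s) (k : ℕ) :
    (∫ ρ in Ioi (0:ℝ), ρ ^ k * Real.exp (-(ρ ^ (1 / s))))
      = s * Real.Gamma (s * (k + 1)) := by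
  rw [Real.Gamma_eq_integral (by positivity), ← integral_const_mul,
    ← integral_comp_rpow_Ioi_of_pos (g := fun ρ : ℝ => ρ ^ k * Real.exp (-(ρ ^ (1 / s)))) hs]
  refine setIntegral_congr_fun measurableSet_Ioi (fun x hx => ?_)
  have hx0 : (0:ℝ) < x := hx
  have := gevrey_aux_eqon hs k hx0
  rw [smul_eq_mul] at this
  rw [smul_eq_mul, this]
  ring

-- (n/e)^n ≤ n!
lemma gevrey_pow_le_factorial : ∀ n : ℕ, ((n : ℝ) / Real.exp 1) ^ n ≤ n.factorial := by
  intro n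
  induction n with
  | zero => simp
  | succ n ih =>
    have he : (0:ℝ) < Real.exp 1 := Real.exp_pos 1
    have key : ((n:ℝ) + 1) ^ n ≤ Real.exp 1 * (n:ℝ) ^ n := by
      rcases Nat.eq_zero_or_pos n with h0 | hn
      · subst h0; simpa using Real.one_le_exp (by norm_num)
      · have hn0 : (0:ℝ) < n := by exact_mod_cast hn
        have h1 : (n:ℝ) + 1 ≤ n * Real.exp (1 / n) := by
          have hinv : (n:ℝ) * (1/n) = 1 := by field_simp
          nlinarith [Real.add_one_le_exp (1 / (n:ℝ))]
        calc ((n:ℝ) + 1) ^ n ≤ ((n:ℝ) * Real.exp (1 / n)) ^ n := by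
              apply pow_le_pow_left₀ (by positivity) h1
        _ = (n:ℝ) ^ n * Real.exp (1 / n) ^ n := by rw [mul_pow]
        _ = Real.exp 1 * (n:ℝ) ^ n := by
              rw [← Real.exp_nat_mul, mul_one_div, div_self (by exact_mod_cast hn.ne')]
              ring
    have step : (((n:ℝ) + 1) / Real.exp 1) ^ (n + 1)
        ≤ ((n:ℝ) + 1) * (((n:ℝ)) / Real.exp 1) ^ n := by
      calc (((n:ℝ) + 1) / Real.exp 1) ^ (n + 1)
          = (((n:ℝ)+1) ^ n * ((n:ℝ)+1)) / (Real.exp 1 ^ n * Real.exp 1) := by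
            rw [div_pow, pow_succ, pow_succ]
      _ ≤ ((Real.exp 1 * (n:ℝ) ^ n) * ((n:ℝ)+1)) / (Real.exp 1 ^ n * Real.exp 1) := by
            gcongr
      _ = ((n:ℝ) + 1) * ((n:ℝ) ^ n / Real.exp 1 ^ n) := by
            field_simp
      _ = ((n:ℝ) + 1) * (((n:ℝ)) / Real.exp 1) ^ n := by rw [div_pow]
    push_cast
    calc (((n:ℝ) + 1) / Real.exp 1) ^ (n + 1) ≤ ((n:ℝ) + 1) * (((n:ℝ)) / Real.exp 1) ^ n := step
    _ ≤ ((n:ℝ) + 1) * n.factorial := by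
          apply mul_le_mul_of_nonneg_left ih (by positivity)
    _ = (((n+1).factorial : ℕ) : ℝ) := by rw [Nat.factorial_succ]; push_cast; ring

-- n! ≤ e * n * (n/e)^n  for n ≥ 1
lemma gevrey_factorial_le : ∀ n : ℕ, 1 ≤ n →
    (n.factorial : ℝ) ≤ Real.exp 1 * n * ((n : ℝ) / Real.exp 1) ^ n := by
  intro n
  induction n with
  | zero => intro h; omega
  | succ n ih =>
    intro _
    have he : (0:ℝ) < Real.exp 1 := Real.exp_pos 1
    rcases Nat.eq_zero_or_pos n with h0 | hn
    · subst h0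
      norm_num [Nat.factorial]
    · have hn0 : (0:ℝ) < n := by exact_mod_cast hn
      -- key : e * n^(n+1) ≤ (n+1)^(n+1)
      have hkey : Real.exp 1 * (n:ℝ) ^ (n+1) ≤ ((n:ℝ)+1) ^ (n+1) := by
        have h1 : Real.exp (1 / ((n:ℝ)+1)) ≤ ((n:ℝ)+1) / n := by
          have h2 := Real.add_one_le_exp (-(1 / ((n:ℝ)+1)))
          have h3 : (0:ℝ) < (n:ℝ) / ((n:ℝ)+1) := by positivity
          have h4 : (n:ℝ) / ((n:ℝ)+1) ≤ Real.exp (-(1 / ((n:ℝ)+1))) := by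
            have : -(1 / ((n:ℝ)+1)) + 1 = (n:ℝ) / ((n:ℝ)+1) := by field_simp; ring
            linarith [h2, this.symm.le]
          have h6 := inv_anti₀ h3 h4
          rwa [Real.exp_neg, inv_inv, inv_div] at h6
        have h5 : Real.exp 1 = Real.exp (1 / ((n:ℝ)+1)) ^ (n+1) := by
          rw [← Real.exp_nat_mul]
          congr 1
          push_cast
          field_simp
        calc Real.exp 1 * (n:ℝ) ^ (n+1)
            = (Real.exp (1 / ((n:ℝ)+1)) * n) ^ (n+1) := by rw [mul_pow, ← h5]
        _ ≤ ((((n:ℝ)+1) / n) * n) ^ (n+1) := by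
              apply pow_le_pow_left₀ (by positivity)
              exact mul_le_mul_of_nonneg_right h1 hn0.le
        _ = ((n:ℝ)+1) ^ (n+1) := by
              congr 1; field_simp
      have step : (n:ℝ) * ((n:ℝ) / Real.exp 1) ^ n ≤ (((n:ℝ)+1) / Real.exp 1) ^ (n+1) := by
        rw [div_pow, div_pow, mul_div_assoc']
        rw [div_le_div_iff₀ (by positivity) (by positivity)]
        calc (n:ℝ) * ((n:ℝ)^n) * Real.exp 1 ^ (n+1)
            = (Real.exp 1 * (n:ℝ)^(n+1)) * Real.exp 1 ^ n := by ring
        _ ≤ (((n:ℝ)+1)^(n+1)) * Real.exp 1 ^ n := by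
              apply mul_le_mul_of_nonneg_right hkey (by positivity)
      have ihn := ih hn
      push_cast
      calc ((n+1).factorial : ℝ) = ((n:ℝ)+1) * n.factorial := by
            rw [Nat.factorial_succ]; push_cast; ring
      _ ≤ ((n:ℝ)+1) * (Real.exp 1 * n * ((n:ℝ)/Real.exp 1) ^ n) := by
            apply mul_le_mul_of_nonneg_left ihn (by positivity)
      _ = Real.exp 1 * ((n:ℝ)+1) * ((n:ℝ) * ((n:ℝ)/Real.exp 1) ^ n) := by ring
      _ ≤ Real.exp 1 * ((n:ℝ)+1) * ((((n:ℝ)+1)/Real.exp 1) ^ (n+1)) := by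
            apply mul_le_mul_of_nonneg_left step (by positivity)
      _ = Real.exp 1 * ((n:ℝ)+1) * ((((n:ℝ)+1) / Real.exp 1) ^ (n+1)) := by ring

-- x ↦ (x/e)^x is monotone on [1, ∞)
lemma gevrey_mono_xe {a b : ℝ} (ha : 1 ≤ a) (hab : a ≤ b) :
    (a / Real.exp 1) ^ a ≤ (b / Real.exp 1) ^ b := by
  have ha0 : (0:ℝ) < a := lt_of_lt_of_le one_pos ha
  have hb0 : (0:ℝ) < b := lt_of_lt_of_le ha0 hab
  have key : a * Real.log a - a ≤ b * Real.log b - b := by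
    have hmono : MonotoneOn (fun x : ℝ => x * Real.log x - x) (Ici 1) := by
      apply monotoneOn_of_deriv_nonneg (convex_Ici 1)
      · exact (Real.continuous_mul_log.sub continuous_id).continuousOn
      · intro x hx
        rw [interior_Ici] at hx
        have hx1 : (1:ℝ) < x := hx
        exact ((Real.hasDerivAt_mul_log (by linarith : x ≠ 0)).sub
          (hasDerivAt_id x)).differentiableAt.differentiableWithinAt
      · intro x hx
        rw [interior_Ici] at hx
        have hx1 : (1:ℝ) < x := hx
        have hd : HasDerivAt (fun x : ℝ => x * Real.log x - x) (Real.log x + 1 - 1) x :=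
          (Real.hasDerivAt_mul_log (by linarith : x ≠ 0)).sub (hasDerivAt_id x)
        rw [hd.deriv]
        simp [Real.log_nonneg hx1.le]
    exact hmono ha (le_trans ha hab) hab
  have hea : (a / Real.exp 1) ^ a = Real.exp (a * Real.log a - a) := by
    rw [rpow_def_of_pos (by positivity), Real.log_div ha0.ne' (Real.exp_ne_zero 1),
      Real.log_exp]
    ring_nf
  have heb : (b / Real.exp 1) ^ b = Real.exp (b * Real.log b - b) := by
    rw [rpow_def_of_pos (by positivity), Real.log_div hb0.ne' (Real.exp_ne_zero 1),
      Real.log_exp]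
    ring_nf
  rw [hea, heb]
  exact Real.exp_le_exp.mpr key

-- Γ(y+1) ≥ (y/e)^y for y > 0
lemma gevrey_gamma_lb {y : ℝ} (hy : 0 < y) :
    (y / Real.exp 1) ^ y ≤ Real.Gamma (y + 1) := by
  rw [Real.Gamma_eq_integral (by positivity)]
  have hint : IntegrableOn (fun x : ℝ => Real.exp (-x) * x ^ (y + 1 - 1)) (Ioi 0) :=
    Real.GammaIntegral_convergent (by positivity)
  have h1 : ∫ x in Ioi y, Real.exp (-x) * y ^ y ≤ ∫ x in Ioi y, Real.exp (-x) * x ^ (y + 1 - 1) := by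
    apply setIntegral_mono_on
    · exact ((exp_neg_integrableOn_Ioi y one_pos).congr_fun (fun x _ => by norm_num)
        measurableSet_Ioi).mul_const _
    · exact hint.mono_set (fun x hx => lt_trans hy hx)
    · exact measurableSet_Ioi
    · intro x hx
      have hxy : y ≤ x := (mem_Ioi.mp hx).le
      have : y ^ y ≤ x ^ (y + 1 - 1) := by
        rw [add_sub_cancel_right]
        exact Real.rpow_le_rpow hy.le hxy hy.le
      exact mul_le_mul_of_nonneg_left this (Real.exp_nonneg _)
  have h2 : ∫ x in Ioi y, Real.exp (-x) * x ^ (y + 1 - 1)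
      ≤ ∫ x in Ioi 0, Real.exp (-x) * x ^ (y + 1 - 1) := by
    apply setIntegral_mono_set hint
    · filter_upwards [ae_restrict_mem measurableSet_Ioi] with x hx
      exact mul_nonneg (Real.exp_nonneg _) (Real.rpow_nonneg (le_of_lt hx) _)
    · exact HasSubset.Subset.eventuallyLE (fun x hx => lt_trans hy hx)
  have h3 : ∫ x in Ioi y, Real.exp (-x) * y ^ y = (y / Real.exp 1) ^ y := by
    rw [integral_mul_const, integral_exp_neg_Ioi]
    rw [Real.div_rpow hy.le (Real.exp_nonneg 1), Real.exp_one_rpow, Real.exp_neg]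
    ring
  linarith

-- Γ(x) ≥ 1 for x ≥ 2
lemma gevrey_one_le_gamma {x : ℝ} (hx : 2 ≤ x) : 1 ≤ Real.Gamma x := by
  rcases eq_or_lt_of_le hx with h | h
  · rw [← h, Real.Gamma_two]
  · rw [← Real.Gamma_two]
    exact (Real.Gamma_strictMonoOn_Ici (by norm_num) hx h).le

lemma gevrey_meas (s : ℝ) (k : ℕ) (t : ℝ) :
    AEStronglyMeasurable
      (fun ρ : ℝ => (Complex.I * ρ) ^ k * Complex.exp (Complex.I * ρ * t - ((ρ ^ (1/s) : ℝ) : ℂ)))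
      (volume.restrict (Ioi 0)) := by
  apply Measurable.aestronglyMeasurable
  fun_prop

lemma gevrey_norm (s : ℝ) (k : ℕ) (t : ℝ) {ρ : ℝ} (hρ : 0 < ρ) :
    ‖(Complex.I * ρ) ^ k * Complex.exp (Complex.I * ρ * t - ((ρ ^ (1/s) : ℝ) : ℂ))‖
      = ρ ^ k * Real.exp (-(ρ ^ (1/s))) := by
  rw [norm_mul, norm_pow, Complex.norm_exp]
  congr 1
  · rw [norm_mul, Complex.norm_I, Complex.norm_real, one_mul, Real.norm_eq_abs, abs_of_pos hρ]
  · congr 1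
    simp [Complex.sub_re, Complex.mul_re, Complex.mul_im]

lemma gevrey_hasDeriv (s : ℝ) (k : ℕ) (a : ℝ) (x : ℝ) :
    HasDerivAt (fun x : ℝ => (Complex.I * a) ^ k * Complex.exp (Complex.I * a * x - ((a ^ (1/s) : ℝ) : ℂ)))
      ((Complex.I * a) ^ (k+1) * Complex.exp (Complex.I * a * x - ((a ^ (1/s) : ℝ) : ℂ))) x := by
  have h0 : HasDerivAt (fun x : ℝ => ((x : ℝ) : ℂ)) 1 x := by
    simpa using (hasDerivAt_id x).ofReal_comp
  have h1 : HasDerivAt (fun x : ℝ => Complex.I * a * x - ((a ^ (1/s) : ℝ) : ℂ))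
      (Complex.I * a) x := by
    simpa using ((h0.const_mul (Complex.I * a)).sub_const ((a ^ (1/s) : ℝ) : ℂ))
  have h2 := (h1.cexp).const_mul ((Complex.I * a) ^ k)
  convert h2 using 1
  · rfl
  ring

lemma gevrey_deriv (s : ℝ) (hs : 0 < s) (k : ℕ) (t : ℝ) :
    iteratedDeriv k (fun t : ℝ => ∫ ρ in Ioi (0:ℝ),
        Complex.exp (Complex.I * ρ * t - ((ρ ^ (1 / s) : ℝ) : ℂ))) t
    = ∫ ρ in Ioi (0:ℝ), (Complex.I * ρ) ^ k
        * Complex.exp (Complex.I * ρ * t - ((ρ ^ (1 / s) : ℝ) : ℂ)) := by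
  induction k generalizing t with
  | zero => simp
  | succ k ih =>
    rw [iteratedDeriv_succ]
    have hfun : iteratedDeriv k (fun t : ℝ => ∫ ρ in Ioi (0:ℝ),
        Complex.exp (Complex.I * ρ * t - ((ρ ^ (1 / s) : ℝ) : ℂ)))
        = fun t : ℝ => ∫ ρ in Ioi (0:ℝ), (Complex.I * ρ) ^ k
          * Complex.exp (Complex.I * ρ * t - ((ρ ^ (1 / s) : ℝ) : ℂ)) := funext ih
    rw [hfun]
    have hint : ∀ (j : ℕ) (x : ℝ), Integrable
        (fun ρ : ℝ => (Complex.I * ρ) ^ j * Complex.exp (Complex.I * ρ * x - ((ρ ^ (1/s) : ℝ) : ℂ)))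
        (volume.restrict (Ioi 0)) := by
      intro j x
      apply Integrable.mono' (gevrey_aux_int hs j) (gevrey_meas s j x)
      filter_upwards [ae_restrict_mem measurableSet_Ioi] with ρ hρ
      rw [gevrey_norm s j x hρ]
    have key := hasDerivAt_integral_of_dominated_loc_of_deriv_le
      (F := fun (x : ℝ) (ρ : ℝ) => (Complex.I * ρ) ^ k * Complex.exp (Complex.I * ρ * x - ((ρ ^ (1/s) : ℝ) : ℂ)))
      (F' := fun (x : ℝ) (ρ : ℝ) => (Complex.I * ρ) ^ (k+1) * Complex.exp (Complex.I * ρ * x - ((ρ ^ (1/s) : ℝ) : ℂ)))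
      (bound := fun ρ : ℝ => ρ ^ (k+1) * Real.exp (-(ρ ^ (1/s))))
      (x₀ := t) (μ := volume.restrict (Ioi 0)) (Metric.ball_mem_nhds t one_pos)
      (Filter.Eventually.of_forall (fun x => gevrey_meas s k x))
      (hint k t)
      (gevrey_meas s (k+1) t)
      ?_ (gevrey_aux_int hs (k+1)) ?_
    · exact key.2.deriv
    · filter_upwards [ae_restrict_mem measurableSet_Ioi] with ρ hρ
      intro x _
      rw [gevrey_norm s (k+1) x hρ]
    · filter_upwards with ρ
      intro x _
      exact gevrey_hasDeriv s k ρ x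

lemma gevrey_lower (s : ℝ) (hs : 1 < s) (k : ℕ) (hk : 1 ≤ k) :
    (min 1 (s / Real.exp 1 ^ s) * (s ^ s / 2 ^ s)) ^ k * ((k.factorial : ℝ) ^ s)
      ≤ s * Real.Gamma (s * (k + 1)) := by
  have he : (0:ℝ) < Real.exp 1 := Real.exp_pos 1
  have hs0 : (0:ℝ) < s := by linarith
  have hk0 : (0:ℝ) < k := by exact_mod_cast hk
  have hkf : (0:ℝ) < k.factorial := by exact_mod_cast k.factorial_pos
  set e := Real.exp 1 with he_def
  -- step 1 : Γ(s(k+1)) ≥ (y/e)^y  with  y = s(k+1)-1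
  set y := s * (k + 1) - 1 with hy_def
  have hy1 : 1 ≤ y := by
    have : (2:ℝ) ≤ (k:ℝ) + 1 := by exact_mod_cast Nat.succ_le_succ hk
    nlinarith
  have hy0 : 0 < y := by linarith
  have hG1 : (y / e) ^ y ≤ Real.Gamma (s * (k + 1)) := by
    have := gevrey_gamma_lb hy0
    rwa [hy_def, sub_add_cancel] at this
  -- step 2 : (y/e)^y ≥ (sk/e)^(sk)
  have hk1 : (1:ℝ) ≤ (k:ℝ) := by exact_mod_cast hk
  have hsk1 : 1 ≤ s * k := by nlinarith
  have hsky : s * k ≤ y := by nlinarith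
  have hG2 : (s * k / e) ^ (s * k) ≤ (y / e) ^ y := gevrey_mono_xe hsk1 hsky
  -- step 3 : (sk/e)^(sk) = (s^s)^k * ((k/e)^(k))^s
  have h3 : (s * (k:ℝ) / e) ^ (s * (k:ℝ))
      = (s ^ s) ^ k * (((k:ℝ) / e) ^ k) ^ s := by
    have hdiv : s * (k:ℝ) / e = s * ((k:ℝ) / e) := by ring
    rw [hdiv, Real.mul_rpow hs0.le (by positivity)]
    congr 1
    · rw [← Real.rpow_natCast (s ^ s) k, ← Real.rpow_mul hs0.le]
    · rw [← Real.rpow_natCast ((k:ℝ) / e) k, ← Real.rpow_mul (by positivity),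
        mul_comm (s : ℝ) (k:ℝ)]
  -- step 4 : ((k/e)^k)^s ≥ (k!)^s / (e*k)^s
  have h4 : ((k.factorial : ℝ)) ^ s / ((e * k) ^ s) ≤ (((k:ℝ) / e) ^ k) ^ s := by
    rw [← Real.div_rpow hkf.le (by positivity)]
    apply Real.rpow_le_rpow (by positivity) _ hs0.le
    rw [div_le_iff₀ (by positivity)]
    have := gevrey_factorial_le k hk
    calc (k.factorial : ℝ) ≤ e * k * (((k:ℝ)) / e) ^ k := this
    _ = ((k:ℝ) / e) ^ k * (e * k) := by ring
  -- step 5 : (e*k)^s ≤ e^s * (2^s)^k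
  have h5 : ((e * k) ^ s) ≤ e ^ s * (2 ^ s) ^ k := by
    have hk2 : (k:ℝ) ≤ 2 ^ k := by exact_mod_cast (Nat.lt_two_pow_self (n := k)).le
    calc (e * k) ^ s ≤ (e * 2 ^ k) ^ s := by
          apply Real.rpow_le_rpow (by positivity) (by nlinarith) hs0.le
    _ = e ^ s * ((2:ℝ) ^ k) ^ s := Real.mul_rpow he.le (by positivity)
    _ = e ^ s * (2 ^ s) ^ k := by
          congr 1
          rw [← Real.rpow_natCast ((2:ℝ) ^ s) k, ← Real.rpow_mul (by norm_num),
            ← Real.rpow_natCast (2:ℝ) k, ← Real.rpow_mul (by norm_num), mul_comm]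
  -- assemble
  have hmin : min 1 (s / e ^ s) ≤ 1 := min_le_left _ _
  have hmin0 : 0 < min 1 (s / e ^ s) := lt_min one_pos (by positivity)
  have hcpow : (min 1 (s / e ^ s) * (s ^ s / 2 ^ s)) ^ k
      ≤ (s / e ^ s) * ((s ^ s) ^ k / (2 ^ s) ^ k) := by
    rw [mul_pow]
    apply mul_le_mul _ (le_of_eq (div_pow _ _ _)) (by positivity) (by positivity)
    calc (min 1 (s / e ^ s)) ^ k ≤ (min 1 (s / e ^ s)) ^ 1 :=
          pow_le_pow_of_le_one hmin0.le hmin hk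
    _ = min 1 (s / e ^ s) := pow_one _
    _ ≤ s / e ^ s := min_le_right _ _
  have hGpos : 0 ≤ (y / e) ^ y := Real.rpow_nonneg (by positivity) _
  -- chain
  have main : (s / e ^ s) * ((s ^ s) ^ k / (2 ^ s) ^ k) * (k.factorial : ℝ) ^ s
      ≤ s * Real.Gamma (s * (k + 1)) := by
    have c1 : (s ^ s) ^ k * ((k.factorial : ℝ) ^ s / ((e * k) ^ s))
        ≤ Real.Gamma (s * (k + 1)) := by
      calc (s ^ s) ^ k * ((k.factorial : ℝ) ^ s / ((e * k) ^ s))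
          ≤ (s ^ s) ^ k * (((k:ℝ) / e) ^ k) ^ s :=
            mul_le_mul_of_nonneg_left h4 (by positivity)
      _ = (s * (k:ℝ) / e) ^ (s * (k:ℝ)) := h3.symm
      _ ≤ (y / e) ^ y := hG2
      _ ≤ Real.Gamma (s * (k + 1)) := hG1
    have c2 : (s / e ^ s) * ((s ^ s) ^ k / (2 ^ s) ^ k) * (k.factorial : ℝ) ^ s
        ≤ s * ((s ^ s) ^ k * ((k.factorial : ℝ) ^ s / ((e * k) ^ s))) := by
      have expand : s * ((s ^ s) ^ k * ((k.factorial : ℝ) ^ s / ((e * k) ^ s)))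
          = s * (s ^ s) ^ k * (k.factorial : ℝ) ^ s / ((e * k) ^ s) := by ring
      have expand2 : (s / e ^ s) * ((s ^ s) ^ k / (2 ^ s) ^ k) * (k.factorial : ℝ) ^ s
          = s * (s ^ s) ^ k * (k.factorial : ℝ) ^ s / (e ^ s * (2 ^ s) ^ k) := by ring
      rw [expand, expand2]
      gcongr
    calc _ ≤ s * ((s ^ s) ^ k * ((k.factorial : ℝ) ^ s / ((e * k) ^ s))) := c2
    _ ≤ s * Real.Gamma (s * (k + 1)) := mul_le_mul_of_nonneg_left c1 hs0.le
  calc (min 1 (s / e ^ s) * (s ^ s / 2 ^ s)) ^ k * ((k.factorial : ℝ) ^ s)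
      ≤ (s / e ^ s) * ((s ^ s) ^ k / (2 ^ s) ^ k) * ((k.factorial : ℝ) ^ s) :=
        mul_le_mul_of_nonneg_right hcpow (by positivity)
  _ ≤ s * Real.Gamma (s * (k + 1)) := main

lemma gevrey_upper (s : ℝ) (hs : 1 < s) (k : ℕ) (hk : 1 ≤ k) :
    s * Real.Gamma (s * (k + 1))
      ≤ (Real.exp 1 * s ^ 2 * (2 * 2 ^ s) * s ^ s) ^ (k+1) * ((k.factorial : ℝ) ^ s) := by
  have he : (0:ℝ) < Real.exp 1 := Real.exp_pos 1
  have he1 : (1:ℝ) ≤ Real.exp 1 := Real.one_le_exp (by norm_num)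
  have hs0 : (0:ℝ) < s := by linarith
  have hk1 : (1:ℝ) ≤ (k:ℝ) := by exact_mod_cast hk
  have hkf : (0:ℝ) < k.factorial := by exact_mod_cast k.factorial_pos
  set e := Real.exp 1 with he_def
  set x := s * ((k:ℝ) + 1) with hx_def
  have hx2 : 2 < x := by nlinarith
  have hx0 : (0:ℝ) < x := by linarith
  have hxM' : x ≤ (⌈x⌉₊:ℝ) := Nat.le_ceil x
  have hM2 : 2 < ⌈x⌉₊ := by exact_mod_cast lt_of_lt_of_le hx2 hxM'
  obtain ⟨N, hM⟩ : ∃ N, ⌈x⌉₊ = N + 1 := ⟨⌈x⌉₊ - 1, by omega⟩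
  have hN2 : 2 ≤ N := by omega
  have hN1 : (1:ℝ) ≤ (N:ℝ) := by exact_mod_cast le_trans (by norm_num) hN2
  have hxM : x ≤ (N:ℝ) + 1 := by
    rw [hM] at hxM'; push_cast at hxM'; linarith
  have hNx : (N:ℝ) ≤ x := by
    have h := Nat.ceil_lt_add_one hx0.le
    rw [hM] at h
    push_cast at h
    linarith
  -- Gamma x ≤ N!
  have hG : Real.Gamma x ≤ (N.factorial : ℝ) := by
    rw [← Real.Gamma_nat_eq_factorial N]
    have hmem1 : x ∈ Ici (2:ℝ) := hx2.le
    have hmem2 : ((N:ℝ) + 1) ∈ Ici (2:ℝ) := by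
      simp only [mem_Ici]; linarith
    exact Real.Gamma_strictMonoOn_Ici.monotoneOn hmem1 hmem2 hxM
  -- N! ≤ e*N*(N/e)^N ≤ e*N*(x/e)^x
  have hfac : (N.factorial : ℝ) ≤ e * N * ((x / e) ^ x) := by
    calc (N.factorial : ℝ) ≤ e * N * (((N:ℝ)) / e) ^ N := gevrey_factorial_le N (by omega)
    _ ≤ e * N * ((x / e) ^ x) := by
        apply mul_le_mul_of_nonneg_left _ (by positivity)
        rw [← Real.rpow_natCast (((N:ℝ)) / e) N]
        exact gevrey_mono_xe hN1 hNx
  -- split (x/e)^x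
  have hsplit : (x / e) ^ x = (s ^ s) ^ (k+1) * ((((k:ℝ) + 1) / e) ^ (s * ((k:ℝ)+1))) := by
    have hdiv : x / e = s * (((k:ℝ) + 1) / e) := by rw [hx_def]; ring
    rw [hdiv, Real.mul_rpow hs0.le (by positivity)]
    congr 1
    rw [hx_def, ← Real.rpow_natCast (s ^ s) (k+1), ← Real.rpow_mul hs0.le]
    push_cast
    ring_nf
  have hsplit2 : (((k:ℝ) + 1) / e) ^ (s * ((k:ℝ)+1))
      = (((((k:ℝ) + 1)) / e) ^ (k+1) : ℝ) ^ s := by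
    rw [← Real.rpow_natCast ((((k:ℝ) + 1)) / e) (k+1), ← Real.rpow_mul (by positivity)]
    push_cast
    ring_nf
  have hfac2 : ((((k:ℝ) + 1) / e) ^ (k+1) : ℝ) ^ s ≤ (((k+1).factorial : ℝ)) ^ s := by
    apply Real.rpow_le_rpow (by positivity) _ hs0.le
    have := gevrey_pow_le_factorial (k+1)
    push_cast at this ⊢
    exact this
  have hfacsplit : (((k+1).factorial : ℝ)) ^ s = ((k:ℝ)+1) ^ s * ((k.factorial : ℝ)) ^ s := by
    rw [← Real.mul_rpow (by positivity) (by positivity)]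
    congr 1
    rw [Nat.factorial_succ]
    push_cast
    ring
  have h2k : ((k:ℝ)+1) ≤ 2 ^ k := by
    exact_mod_cast Nat.lt_two_pow_self (n := k)
  have h2ks : ((k:ℝ)+1) ^ s ≤ (2 ^ s) ^ k := by
    calc ((k:ℝ)+1) ^ s ≤ ((2:ℝ) ^ k) ^ s := Real.rpow_le_rpow (by positivity) h2k hs0.le
    _ = (2 ^ s) ^ k := by
        rw [← Real.rpow_natCast ((2:ℝ) ^ s) k, ← Real.rpow_mul (by norm_num),
          ← Real.rpow_natCast (2:ℝ) k, ← Real.rpow_mul (by norm_num), mul_comm]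
  have hNle : (N:ℝ) ≤ s * ((k:ℝ)+1) := by rw [← hx_def]; exact hNx
  -- assemble
  have main : s * Real.Gamma x ≤
      (e * s ^ 2 * ((k:ℝ)+1)) * ((s ^ s) ^ (k+1) * ((2 ^ s) ^ k * (k.factorial : ℝ) ^ s)) := by
    calc s * Real.Gamma x ≤ s * (e * N * ((x / e) ^ x)) := by
          apply mul_le_mul_of_nonneg_left (le_trans hG hfac) hs0.le
    _ ≤ s * (e * (s * ((k:ℝ)+1)) * ((x / e) ^ x)) := by
          apply mul_le_mul_of_nonneg_left _ hs0.le
          apply mul_le_mul_of_nonneg_right _ (Real.rpow_nonneg (by positivity) _)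
          apply mul_le_mul_of_nonneg_left hNle he.le
    _ = (e * s ^ 2 * ((k:ℝ)+1)) * ((x / e) ^ x) := by ring
    _ = (e * s ^ 2 * ((k:ℝ)+1)) * ((s ^ s) ^ (k+1) * (((((k:ℝ) + 1)) / e) ^ (k+1) : ℝ) ^ s) := by
          rw [hsplit, hsplit2]
    _ ≤ (e * s ^ 2 * ((k:ℝ)+1)) * ((s ^ s) ^ (k+1) * (((k+1).factorial : ℝ)) ^ s) := by
          apply mul_le_mul_of_nonneg_left _ (by positivity)
          exact mul_le_mul_of_nonneg_left hfac2 (by positivity)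
    _ = (e * s ^ 2 * ((k:ℝ)+1)) * ((s ^ s) ^ (k+1) * (((k:ℝ)+1) ^ s * (k.factorial : ℝ) ^ s)) := by
          rw [hfacsplit]
    _ ≤ (e * s ^ 2 * ((k:ℝ)+1)) * ((s ^ s) ^ (k+1) * ((2 ^ s) ^ k * (k.factorial : ℝ) ^ s)) := by
          apply mul_le_mul_of_nonneg_left _ (by positivity)
          apply mul_le_mul_of_nonneg_left _ (by positivity)
          exact mul_le_mul_of_nonneg_right h2ks (by positivity)
  calc s * Real.Gamma (s * ((k:ℝ) + 1))
      ≤ (e * s ^ 2 * ((k:ℝ)+1)) * ((s ^ s) ^ (k+1) * ((2 ^ s) ^ k * (k.factorial : ℝ) ^ s)) := main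
  _ ≤ ((e * s ^ 2) ^ (k+1) * (2 * 2^s) ^ (k+1)) * ((s ^ s) ^ (k+1) * (k.factorial : ℝ) ^ s) := by
      have hb1 : (1:ℝ) ≤ e * s ^ 2 := by nlinarith
      have hb2 : (1:ℝ) ≤ 2 * 2 ^ s := by
        have : (1:ℝ) ≤ 2 ^ s := Real.one_le_rpow (by norm_num) hs0.le
        nlinarith
      have c1 : e * s ^ 2 ≤ (e * s ^ 2) ^ (k+1) := le_self_pow₀ (by linarith) (by omega)
      have c2 : ((k:ℝ)+1) * (2 ^ s) ^ k ≤ (2 * 2 ^ s) ^ (k+1) := by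
        calc ((k:ℝ)+1) * (2 ^ s) ^ k ≤ (2:ℝ) ^ k * (2 ^ s) ^ k := by
              apply mul_le_mul_of_nonneg_right h2k (by positivity)
        _ = (2 * 2 ^ s) ^ k := by rw [mul_pow]
        _ ≤ (2 * 2 ^ s) ^ (k+1) := pow_le_pow_right₀ (by linarith) (by omega)
      calc (e * s ^ 2 * ((k:ℝ)+1)) * ((s ^ s) ^ (k+1) * ((2 ^ s) ^ k * (k.factorial : ℝ) ^ s))
          = ((e * s ^ 2) * (((k:ℝ)+1) * (2 ^ s) ^ k)) * ((s ^ s) ^ (k+1) * (k.factorial : ℝ) ^ s) := by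
            ring
      _ ≤ ((e * s ^ 2) ^ (k+1) * (2 * 2^s) ^ (k+1)) * ((s ^ s) ^ (k+1) * (k.factorial : ℝ) ^ s) := by
            apply mul_le_mul_of_nonneg_right _ (by positivity)
            exact mul_le_mul c1 c2 (by positivity) (by positivity)
  _ = (e * s ^ 2 * (2 * 2 ^ s) * s ^ s) ^ (k+1) * ((k.factorial : ℝ) ^ s) := by
      rw [mul_pow (e * s ^ 2 * (2 * 2 ^ s)) (s ^ s), mul_pow (e * s ^ 2) (2 * 2 ^ s)]
      ring

lemma gevrey_bounds (s : ℝ) (hs : 1 < s) :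
    ∃ C c : ℝ, 0 < C ∧ 0 < c ∧ ∀ k : ℕ,
      c ^ k * ((k.factorial : ℝ) ^ s) ≤ s * Real.Gamma (s * (k + 1)) ∧
      s * Real.Gamma (s * (k + 1)) ≤ C ^ (k+1) * ((k.factorial : ℝ) ^ s) := by
  have he : (0:ℝ) < Real.exp 1 := Real.exp_pos 1
  have hs0 : (0:ℝ) < s := by linarith
  set C₀ := Real.exp 1 * s ^ 2 * (2 * 2 ^ s) * s ^ s with hC₀
  have hC₀pos : 0 < C₀ := by positivity
  refine ⟨max C₀ (s * Real.Gamma s), min 1 (s / Real.exp 1 ^ s) * (s ^ s / 2 ^ s),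
    lt_of_lt_of_le hC₀pos (le_max_left C₀ (s * Real.Gamma s)), by positivity, ?_⟩
  intro k
  rcases Nat.eq_zero_or_pos k with rfl | hk
  · have h1 : s * ((0:ℕ):ℝ) + s = s := by norm_num
    have hG : s * Real.Gamma (s * (((0:ℕ):ℝ) + 1)) = Real.Gamma (s + 1) := by
      rw [Real.Gamma_add_one hs0.ne']
      norm_num
    constructor
    · rw [hG]
      simp only [pow_zero, Nat.factorial_zero, Nat.cast_one, Real.one_rpow, one_mul, mul_one]
      exact gevrey_one_le_gamma (by linarith)
    · rw [hG]
      simp only [pow_one, Nat.factorial_zero, Nat.cast_one, Real.one_rpow, mul_one]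
      have : Real.Gamma (s + 1) = s * Real.Gamma s := Real.Gamma_add_one hs0.ne'
      rw [this]
      rw [pow_one]; exact le_max_right C₀ (s * Real.Gamma s)
  · constructor
    · exact gevrey_lower s hs k hk
    · calc s * Real.Gamma (s * (k + 1)) ≤ C₀ ^ (k+1) * ((k.factorial : ℝ) ^ s) :=
            gevrey_upper s hs k hk
      _ ≤ (max C₀ (s * Real.Gamma s)) ^ (k+1) * ((k.factorial : ℝ) ^ s) := by
            apply mul_le_mul_of_nonneg_right _ (by positivity)
            exact pow_le_pow_left₀ hC₀pos.le (le_max_left _ _) _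

/-- For s > 1 and u(x,t) = ∫₀^∞ exp(-ρx²/2 + iρt - ρ^{1/s}) dρ, the k-th time
derivative D_t^k u(0,0) (with D_t = (1/i)∂_t, so D_t^k = (-i)^k ∂_t^k) equals
∫₀^∞ ρ^k e^{-ρ^{1/s}} dρ = s·Γ(s(k+1)), and there are constants C, c > 0 with
c^k (k!)^s ≤ |D_t^k u(0,0)| ≤ C^{k+1} (k!)^s for all k. -/
theorem time_derivatives_of_gevrey_solution (s : ℝ) (hs : 1 < s)
    (u : ℝ → ℝ → ℂ)
    (hu : ∀ x t : ℝ, u x t =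
      ∫ ρ in Set.Ioi (0 : ℝ),
        Complex.exp (-(ρ * x ^ 2 / 2 : ℝ) + Complex.I * (ρ : ℂ) * (t : ℂ)
          - (ρ ^ (1 / s) : ℝ))) :
    (∀ k : ℕ,
      (-Complex.I) ^ k * iteratedDeriv k (fun t : ℝ => u 0 t) 0
        = ((∫ ρ in Set.Ioi (0 : ℝ), ρ ^ k * Real.exp (-(ρ ^ (1 / s)))) : ℝ)
      ∧ (-Complex.I) ^ k * iteratedDeriv k (fun t : ℝ => u 0 t) 0
        = ((s * Real.Gamma (s * (k + 1)) : ℝ) : ℂ))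
    ∧ ∃ C c : ℝ, 0 < C ∧ 0 < c ∧ ∀ k : ℕ,
        c ^ k * ((k.factorial : ℝ) ^ s)
          ≤ ‖(-Complex.I) ^ k * iteratedDeriv k (fun t : ℝ => u 0 t) 0‖
        ∧ ‖(-Complex.I) ^ k * iteratedDeriv k (fun t : ℝ => u 0 t) 0‖
          ≤ C ^ (k + 1) * ((k.factorial : ℝ) ^ s) := by
  have hs0 : (0:ℝ) < s := by linarith
  have hU : (fun t : ℝ => u 0 t) = (fun t : ℝ => ∫ ρ in Ioi (0:ℝ),
      Complex.exp (Complex.I * ρ * t - ((ρ ^ (1 / s) : ℝ) : ℂ))) := by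
    funext t
    rw [hu]
    simp
  have key : ∀ k : ℕ,
      (-Complex.I) ^ k * iteratedDeriv k (fun t : ℝ => u 0 t) 0
        = ((∫ ρ in Set.Ioi (0 : ℝ), ρ ^ k * Real.exp (-(ρ ^ (1 / s)))) : ℝ) := by
    intro k
    rw [hU, gevrey_deriv s hs0 k 0, ← integral_const_mul]
    have hcongr : ∀ ρ ∈ Ioi (0:ℝ),
        (-Complex.I) ^ k * ((Complex.I * ρ) ^ k
          * Complex.exp (Complex.I * ρ * ((0:ℝ):ℂ) - ((ρ ^ (1 / s) : ℝ) : ℂ)))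
        = (((ρ ^ k * Real.exp (-(ρ ^ (1 / s))) : ℝ)) : ℂ) := by
      intro ρ _
      have h1 : (-Complex.I) ^ k * (Complex.I * (ρ:ℂ)) ^ k = ((ρ:ℝ):ℂ) ^ k := by
        rw [← mul_pow]
        congr 1
        rw [neg_mul, ← mul_assoc, Complex.I_mul_I]
        ring
      have h2 : Complex.exp (Complex.I * ρ * ((0:ℝ):ℂ) - ((ρ ^ (1 / s) : ℝ) : ℂ))
          = ((Real.exp (-(ρ ^ (1 / s))) : ℝ) : ℂ) := by
        rw [Complex.ofReal_exp]
        push_cast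
        ring_nf
      rw [← mul_assoc, h1, h2]
      push_cast
      ring
    rw [setIntegral_congr_fun measurableSet_Ioi hcongr]
    exact integral_ofReal
  have keyval : ∀ k : ℕ,
      (-Complex.I) ^ k * iteratedDeriv k (fun t : ℝ => u 0 t) 0
        = ((s * Real.Gamma (s * (k + 1)) : ℝ) : ℂ) := by
    intro k
    rw [key k, gevrey_aux_val hs0 k]
  refine ⟨fun k => ⟨key k, keyval k⟩, ?_⟩
  obtain ⟨C, c, hC, hc, hb⟩ := gevrey_bounds s hs
  refine ⟨C, c, hC, hc, fun k => ?_⟩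
  have habs : ‖(-Complex.I) ^ k * iteratedDeriv k (fun t : ℝ => u 0 t) 0‖
      = s * Real.Gamma (s * (k + 1)) := by
    rw [keyval k, Complex.norm_real, Real.norm_eq_abs, abs_of_pos]
    have : (0:ℝ) < s * ((k:ℝ) + 1) := by positivity
    exact mul_pos hs0 (Real.Gamma_pos_of_pos this)
  rw [habs]
  exact hb k
end

section
/- For the operator P = Σ_{j=1}^ν D_{t_j}² + |t|²|D_s|² - ν|D_s| + D_y + iy|D_s|, on Σ₁ = {t = τ = 0} the sum of the subprincipal symbol and the positive trace is q(y,η,σ) = η + iy|σ| (the terms -ν|σ| and +ν|σ| = tr⁺p₂ cancel). The Poisson bracket condition (1/i){q̄, q} = 2|σ| > 0 holds on Σ₂ = {t = τ = 0, y = η = 0, σ ≠ 0}. -/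
open Complex

/-- For the model operator, on Σ₁ the subprincipal symbol plus positive trace is
q(y,η,σ) = η + iy|σ| (the terms -ν|σ| and tr⁺p₂ = ν|σ| cancel), and the bracket
condition (1/i){q̄,q} = 2|σ| > 0 holds for σ ≠ 0, where
{f,g} = ∂_η f ∂_y g - ∂_y f ∂_η g. -/
theorem model_lower_order_term_bracket (ν m : ℕ) (y η : ℝ)
    (σ : EuclideanSpace ℝ (Fin m)) :
    ((-(ν : ℂ) * (‖σ‖ : ℂ) + (η : ℂ) + Complex.I * (y : ℂ) * (‖σ‖ : ℂ))
        + (ν : ℂ) * (‖σ‖ : ℂ) = (η : ℂ) + Complex.I * (y : ℂ) * (‖σ‖ : ℂ))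
    ∧ (σ ≠ 0 →
        (1 / Complex.I) *
          (deriv (fun η' : ℝ =>
              (starRingEnd ℂ) ((η' : ℂ) + Complex.I * (y : ℂ) * (‖σ‖ : ℂ))) η *
            deriv (fun y' : ℝ => ((η : ℂ) + Complex.I * (y' : ℂ) * (‖σ‖ : ℂ))) y
          - deriv (fun y' : ℝ =>
              (starRingEnd ℂ) ((η : ℂ) + Complex.I * (y' : ℂ) * (‖σ‖ : ℂ))) y *
            deriv (fun η' : ℝ => ((η' : ℂ) + Complex.I * (y : ℂ) * (‖σ‖ : ℂ))) η)
          = 2 * (‖σ‖ : ℂ)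
        ∧ 0 < 2 * ‖σ‖) := by
  constructor
  · ring
  · intro hσ
    have hd1 : deriv (fun η' : ℝ =>
        (starRingEnd ℂ) ((η' : ℂ) + Complex.I * (y : ℂ) * (‖σ‖ : ℂ))) η = 1 := by
      have : (fun η' : ℝ =>
          (starRingEnd ℂ) ((η' : ℂ) + Complex.I * (y : ℂ) * (‖σ‖ : ℂ)))
          = fun η' : ℝ => (η' : ℂ) + (starRingEnd ℂ) (Complex.I * (y : ℂ) * (‖σ‖ : ℂ)) := by
        funext η'; simp [map_add]
      rw [this]
      exact ((Complex.ofRealCLM.hasDerivAt (x := η)).add_const _).deriv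
    have hd2 : deriv (fun y' : ℝ =>
        ((η : ℂ) + Complex.I * (y' : ℂ) * (‖σ‖ : ℂ))) y = Complex.I * (‖σ‖ : ℂ) := by
      have : (fun y' : ℝ => ((η : ℂ) + Complex.I * (y' : ℂ) * (‖σ‖ : ℂ)))
          = fun y' : ℝ => (y' : ℂ) * (Complex.I * (‖σ‖ : ℂ)) + (η : ℂ) := by
        funext y'; ring
      rw [this]
      have := (((Complex.ofRealCLM.hasDerivAt (x := y)).mul_const
        (Complex.I * (‖σ‖ : ℂ))).add_const ((η : ℂ))).deriv
      simpa using this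
    have hd3 : deriv (fun y' : ℝ =>
        (starRingEnd ℂ) ((η : ℂ) + Complex.I * (y' : ℂ) * (‖σ‖ : ℂ))) y
        = -(Complex.I * (‖σ‖ : ℂ)) := by
      have : (fun y' : ℝ => (starRingEnd ℂ) ((η : ℂ) + Complex.I * (y' : ℂ) * (‖σ‖ : ℂ)))
          = fun y' : ℝ => (y' : ℂ) * (-(Complex.I * (‖σ‖ : ℂ))) + (η : ℂ) := by
        funext y'; simp [map_add, map_mul, Complex.conj_ofReal]; ring
      rw [this]
      have := (((Complex.ofRealCLM.hasDerivAt (x := y)).mul_const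
        (-(Complex.I * (‖σ‖ : ℂ)))).add_const ((η : ℂ))).deriv
      simpa using this
    have hd4 : deriv (fun η' : ℝ =>
        ((η' : ℂ) + Complex.I * (y : ℂ) * (‖σ‖ : ℂ))) η = 1 :=
      ((Complex.ofRealCLM.hasDerivAt (x := η)).add_const _).deriv
    refine ⟨?_, by have := norm_pos_iff.mpr hσ; linarith⟩
    rw [hd1, hd2, hd3, hd4]
    have hI := Complex.I_ne_zero
    field_simp
    ring_nf
end
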